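/- Let Σ > 0 be a stationary covariance, i.e., there exists K with A - BK Hurwitz and (A-BK)Σ + Σ(A-BK)' + B₁B₁' = 0. For ε > 0 set K_ε = K + (ε/2)B'Σ⁻¹. Then (A - BK_ε)Σ + Σ(A - BK_ε)' = -εBB' - B₁B₁' ≤ -εBB', and A - BK_ε is Hurwitz. -/

import Mathlib

open scoped ComplexOrder


open Matrix

/-- All eigenvalues (over ℂ) have strictly negative real part. -/
def Hurwitz {n : ℕ} (M : Matrix (Fin n) (Fin n) ℝ) : Prop :=
  ∀ μ ∈ spectrum ℂ (M.map (Complex.ofReal)), μ.re < 0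

section Aux

variable {a b c : ℕ}

lemma mapC_mul (X : Matrix (Fin a) (Fin b) ℝ) (Y : Matrix (Fin b) (Fin c) ℝ) :
    (X * Y).map Complex.ofReal = X.map Complex.ofReal * Y.map Complex.ofReal := by
  ext i j
  simp [Matrix.mul_apply]

lemma mapC_add (X Y : Matrix (Fin a) (Fin b) ℝ) :
    (X + Y).map Complex.ofReal = X.map Complex.ofReal + Y.map Complex.ofReal := by
  ext i j; simp

lemma mapC_smul (r : ℝ) (X : Matrix (Fin a) (Fin b) ℝ) :
    (r • X).map Complex.ofReal = (r : ℂ) • X.map Complex.ofReal := by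
  ext i j; simp

lemma ct_mapC (X : Matrix (Fin a) (Fin b) ℝ) :
    (X.map Complex.ofReal)ᴴ = Xᵀ.map Complex.ofReal := by
  ext i j
  simp [conjTranspose_apply, Complex.conj_ofReal]

lemma mem_spectrum_iff_eigvec (N : Matrix (Fin a) (Fin a) ℂ) (μ : ℂ) :
    μ ∈ spectrum ℂ N ↔ ∃ u : Fin a → ℂ, u ≠ 0 ∧ N *ᵥ u = μ • u := by
  rw [← AlgEquiv.spectrum_eq (Matrix.toLinAlgEquiv' (R := ℂ) (n := Fin a)),
    ← Module.End.hasEigenvalue_iff_mem_spectrum]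
  constructor
  · intro h
    obtain ⟨v, hv, hv0⟩ := h.exists_hasEigenvector
    refine ⟨v, hv0, ?_⟩
    have := hv
    rw [Module.End.mem_eigenspace_iff] at this
    simpa [Matrix.toLinAlgEquiv'_apply, Matrix.toLin'_apply] using this
  · rintro ⟨u, hu, huv⟩
    apply Module.End.hasEigenvalue_of_hasEigenvector (x := u)
    refine ⟨Module.End.mem_eigenspace_iff.mpr ?_, hu⟩
    simpa [Matrix.toLinAlgEquiv'_apply, Matrix.toLin'_apply] using huv

lemma spectrum_transpose (N : Matrix (Fin a) (Fin a) ℂ) :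
    spectrum ℂ Nᵀ = spectrum ℂ N := by
  ext μ
  rw [spectrum.mem_iff, spectrum.mem_iff, Matrix.isUnit_iff_isUnit_det,
    Matrix.isUnit_iff_isUnit_det]
  have h : ((algebraMap ℂ (Matrix (Fin a) (Fin a) ℂ)) μ - Nᵀ) =
      ((algebraMap ℂ (Matrix (Fin a) (Fin a) ℂ)) μ - N)ᵀ := by
    rw [transpose_sub]
    congr 1
    simp [Matrix.algebraMap_eq_diagonal]
  rw [h, det_transpose]

lemma dot_self_mapC (X : Matrix (Fin a) (Fin b) ℝ) (u : Fin a → ℂ) :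
    star u ⬝ᵥ ((X * Xᵀ).map Complex.ofReal *ᵥ u)
      = star ((Xᵀ.map Complex.ofReal) *ᵥ u) ⬝ᵥ ((Xᵀ.map Complex.ofReal) *ᵥ u) := by
  rw [mapC_mul, ← mulVec_mulVec, dotProduct_mulVec]
  congr 1
  have h := star_mulVec ((X.map Complex.ofReal)ᴴ) u
  rw [conjTranspose_conjTranspose] at h
  rw [← h, ct_mapC]

end Aux

/-- For a stationary covariance Σ with stabilizing gain K, the perturbed gain
K_ε = K + (ε/2)B'Σ⁻¹ satisfies (A-BK_ε)Σ + Σ(A-BK_ε)' = -εBB' - B₁B₁' ≤ -εBB'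
(in the Loewner order) and A - BK_ε is Hurwitz. -/
theorem stmt_10 {n m p : ℕ}
    (A : Matrix (Fin n) (Fin n) ℝ) (B : Matrix (Fin n) (Fin m) ℝ)
    (B₁ : Matrix (Fin n) (Fin p) ℝ) (S : Matrix (Fin n) (Fin n) ℝ)
    (K : Matrix (Fin m) (Fin n) ℝ)
    (hS : S.PosDef)
    (hK : Hurwitz (A - B * K))
    (hlyap : (A - B * K) * S + S * (A - B * K)ᵀ + B₁ * B₁ᵀ = 0)
    (ε : ℝ) (hε : 0 < ε) :
    (A - B * (K + (ε / 2) • (Bᵀ * S⁻¹))) * S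
        + S * (A - B * (K + (ε / 2) • (Bᵀ * S⁻¹)))ᵀ
      = -(ε • (B * Bᵀ)) - B₁ * B₁ᵀ ∧
    ((-(ε • (B * Bᵀ))) - ((A - B * (K + (ε / 2) • (Bᵀ * S⁻¹))) * S
        + S * (A - B * (K + (ε / 2) • (Bᵀ * S⁻¹)))ᵀ)).PosSemidef ∧
    Hurwitz (A - B * (K + (ε / 2) • (Bᵀ * S⁻¹))) := by
  have hSunit : IsUnit S.det := hS.det_pos.ne'.isUnit
  have hSsymm : Sᵀ = S := hS.isHermitian.eq
  have hSinv : (S⁻¹)ᵀ = S⁻¹ := by rw [transpose_nonsing_inv, hSsymm]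
  have hinvS : S⁻¹ * S = 1 := nonsing_inv_mul S hSunit
  have hSinvS : S * S⁻¹ = 1 := mul_nonsing_inv S hSunit
  -- the perturbed closed loop as a difference
  set M0 : Matrix (Fin n) (Fin n) ℝ := A - B * K with hM0
  set Mε : Matrix (Fin n) (Fin n) ℝ := A - B * (K + (ε / 2) • (Bᵀ * S⁻¹)) with hMε
  have hMεeq : Mε = M0 - (ε / 2) • (B * (Bᵀ * S⁻¹)) := by
    rw [hMε, hM0]
    rw [Matrix.mul_add, Matrix.mul_smul]
    abel
  have part1 : Mε * S + S * Mεᵀ = -(ε • (B * Bᵀ)) - B₁ * B₁ᵀ := by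
    have h1 : M0 * S + S * M0ᵀ = -(B₁ * B₁ᵀ) := eq_neg_of_add_eq_zero_left hlyap
    rw [hMεeq]
    rw [transpose_sub, transpose_smul, Matrix.sub_mul, Matrix.mul_sub]
    have h2 : ((ε / 2) • (B * (Bᵀ * S⁻¹))) * S = (ε / 2) • (B * Bᵀ) := by
      rw [Matrix.smul_mul, Matrix.mul_assoc, Matrix.mul_assoc, hinvS, Matrix.mul_one]
    have htr : (B * (Bᵀ * S⁻¹))ᵀ = S⁻¹ * B * Bᵀ := by
      rw [transpose_mul, transpose_mul, hSinv, transpose_transpose]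
    have h3 : S * ((ε / 2) • (B * (Bᵀ * S⁻¹))ᵀ) = (ε / 2) • (B * Bᵀ) := by
      rw [htr, mul_smul_comm]
      congr 1
      rw [← Matrix.mul_assoc, ← Matrix.mul_assoc, hSinvS, Matrix.one_mul]
    rw [h2, h3, sub_add_sub_comm, h1]
    have hs : (ε / 2) • (B * Bᵀ) + (ε / 2) • (B * Bᵀ) = ε • (B * Bᵀ) := by
      rw [← add_smul]; norm_num
    rw [hs]
    abel
  refine ⟨part1, ?_, ?_⟩
  · rw [part1]
    have he : -(ε • (B * Bᵀ)) - (-(ε • (B * Bᵀ)) - B₁ * B₁ᵀ) = B₁ * B₁ᵀ := by abel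
    rw [he]
    have := Matrix.posSemidef_self_mul_conjTranspose B₁
    rwa [conjTranspose_eq_transpose_of_trivial] at this
  · -- Hurwitz
    intro μ hμ
    have htr : (B * (Bᵀ * S⁻¹))ᵀ = S⁻¹ * B * Bᵀ := by
      rw [transpose_mul, transpose_mul, hSinv, transpose_transpose]
    -- move to the transpose
    have hμT : μ ∈ spectrum ℂ (Mεᵀ.map Complex.ofReal) := by
      have : Mεᵀ.map Complex.ofReal = (Mε.map Complex.ofReal)ᵀ := by
        ext i j; simp
      rw [this, spectrum_transpose]
      exact hμ
    obtain ⟨u, hu, heig⟩ := (mem_spectrum_iff_eigvec _ μ).mp hμT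
    set c : ℂ := star u ⬝ᵥ (S.map Complex.ofReal *ᵥ u) with hc
    -- Sᶜ is positive semidefinite and invertible
    obtain ⟨L, hL⟩ : ∃ L : Matrix (Fin n) (Fin n) ℝ, S = Lᴴ * L := by
      open scoped MatrixOrder Matrix.Norms.L2Operator in
      obtain ⟨L, hL⟩ := CStarAlgebra.nonneg_iff_eq_star_mul_self.mp hS.posSemidef.nonneg
      exact ⟨L, hL⟩
    have hSc : (S.map Complex.ofReal).PosSemidef := by
      have hLt : S = Lᵀ * L := by
        rw [hL, conjTranspose_eq_transpose_of_trivial]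
      have : S.map Complex.ofReal = (L.map Complex.ofReal)ᴴ * L.map Complex.ofReal := by
        rw [ct_mapC, ← mapC_mul, ← hLt]
      rw [this]
      exact Matrix.posSemidef_conjTranspose_mul_self _
    have hdetc : IsUnit (S.map Complex.ofReal).det := by
      have h := RingHom.map_det Complex.ofRealHom S
      rw [RingHom.mapMatrix_apply] at h
      have h2 : (S.map Complex.ofReal).det = ((S.det : ℝ) : ℂ) := by
        exact h.symm
      rw [h2]
      simp only [isUnit_iff_ne_zero, ne_eq, Complex.ofReal_eq_zero]
      exact hS.det_pos.ne'
    have hc0 : 0 ≤ c := hSc.dotProduct_mulVec_nonneg u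
    have hcne : c ≠ 0 := by
      intro h0
      have hSu : S.map Complex.ofReal *ᵥ u = 0 :=
        (hSc.dotProduct_mulVec_zero_iff u).mp h0
      have : u = 0 := by
        have := congrArg (fun v => (S.map Complex.ofReal)⁻¹ *ᵥ v) hSu
        simpa [mulVec_mulVec, nonsing_inv_mul _ hdetc] using this
      exact hu this
    have hcre : 0 < c.re := by
      rcases (Complex.le_def.mp hc0) with ⟨h1, h2⟩
      simp only [Complex.zero_re, Complex.zero_im] at h1 h2
      rcases lt_or_eq_of_le h1 with h | h
      · exact h
      · exact absurd (Complex.ext h.symm h2.symm) hcne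
    have hcim : c.im = 0 := by
      rcases (Complex.le_def.mp hc0) with ⟨_, h2⟩
      simpa using h2.symm
    -- the quadratic forms
    set y1 : Fin m → ℂ := (Bᵀ.map Complex.ofReal) *ᵥ u with hy1
    set y2 : Fin p → ℂ := (B₁ᵀ.map Complex.ofReal) *ᵥ u with hy2
    set q1 : ℂ := star y1 ⬝ᵥ y1 with hq1
    set q2 : ℂ := star y2 ⬝ᵥ y2 with hq2
    have hq10 : 0 ≤ q1 := dotProduct_star_self_nonneg y1
    have hq20 : 0 ≤ q2 := dotProduct_star_self_nonneg y2
    -- main Lyapunov dot-product identity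
    have hdot : star u ⬝ᵥ ((Mε * S + S * Mεᵀ).map Complex.ofReal *ᵥ u)
        = (μ + (starRingEnd ℂ) μ) * c := by
      rw [mapC_add, mapC_mul, mapC_mul, add_mulVec, dotProduct_add]
      have hterm2 : star u ⬝ᵥ ((S.map Complex.ofReal * Mεᵀ.map Complex.ofReal) *ᵥ u)
          = μ * c := by
        rw [← mulVec_mulVec, heig, mulVec_smul, dotProduct_smul, smul_eq_mul]
      have hterm1 : star u ⬝ᵥ ((Mε.map Complex.ofReal * S.map Complex.ofReal) *ᵥ u)
          = (starRingEnd ℂ) μ * c := by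
        rw [← mulVec_mulVec, dotProduct_mulVec]
        have h := star_mulVec ((Mε.map Complex.ofReal)ᴴ) u
        rw [conjTranspose_conjTranspose] at h
        rw [← h, ct_mapC, heig, star_smul, smul_dotProduct, smul_eq_mul]
        rfl
      rw [hterm1, hterm2]
      ring
    have hq : star u ⬝ᵥ ((-(ε • (B * Bᵀ)) - B₁ * B₁ᵀ).map Complex.ofReal *ᵥ u)
        = -((ε : ℂ) * q1 + q2) := by
      have e : (-(ε • (B * Bᵀ)) - B₁ * B₁ᵀ).map Complex.ofReal
          = -((ε : ℂ) • (B * Bᵀ).map Complex.ofReal) - (B₁ * B₁ᵀ).map Complex.ofReal := by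
        ext i j
        simp [Matrix.map_apply]
      rw [e, sub_mulVec, neg_mulVec, smul_mulVec, dotProduct_sub, dotProduct_neg,
        dotProduct_smul, dot_self_mapC, dot_self_mapC, smul_eq_mul, ← hy1, ← hy2, ← hq1, ← hq2]
      ring
    have key : (μ + (starRingEnd ℂ) μ) * c = -((ε : ℂ) * q1 + q2) := by
      rw [← hdot, part1, hq]
    -- take real parts
    have hre : 2 * μ.re * c.re = -(ε * q1.re + q2.re) := by
      have := congrArg Complex.re key
      rw [Complex.add_conj] at this
      simpa [Complex.re_ofReal_mul] using this
    have hq1re : 0 ≤ q1.re := by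
      rcases (Complex.le_def.mp hq10) with ⟨h1, _⟩; simpa using h1
    have hq2re : 0 ≤ q2.re := by
      rcases (Complex.le_def.mp hq20) with ⟨h1, _⟩; simpa using h1
    have hμle : μ.re ≤ 0 := by nlinarith
    rcases lt_or_eq_of_le hμle with h | h
    · exact h
    -- the boundary case: μ.re = 0 is impossible
    exfalso
    have hzero : ε * q1.re + q2.re = 0 := by nlinarith
    have hq1re0 : q1.re = 0 := by nlinarith
    have hq1im : q1.im = 0 := by
      rcases (Complex.le_def.mp hq10) with ⟨_, h2⟩; simpa using h2.symm
    have hq1z : q1 = 0 := Complex.ext hq1re0 hq1im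
    have hy1z : y1 = 0 := dotProduct_star_self_eq_zero.mp hq1z
    -- then μ is an eigenvalue of (A - B K)ᵀ
    have heig0 : (M0ᵀ.map Complex.ofReal) *ᵥ u = μ • u := by
      have hMt : Mεᵀ = M0ᵀ - (ε / 2) • (S⁻¹ * B * Bᵀ) := by
        rw [hMεeq, transpose_sub, transpose_smul, htr]
      have hzero2 : ((S⁻¹ * B * Bᵀ).map Complex.ofReal) *ᵥ u = 0 := by
        rw [mapC_mul, ← mulVec_mulVec, ← hy1, hy1z, mulVec_zero]
      have : Mεᵀ.map Complex.ofReal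
          = M0ᵀ.map Complex.ofReal - ((ε / 2 : ℝ) : ℂ) • (S⁻¹ * B * Bᵀ).map Complex.ofReal := by
        rw [hMt]
        ext i j
        simp [Matrix.map_apply]
      rw [this, sub_mulVec, smul_mulVec, hzero2, smul_zero, sub_zero] at heig
      exact heig
    have hspec0 : μ ∈ spectrum ℂ (M0.map Complex.ofReal) := by
      rw [← spectrum_transpose]
      have : (M0.map Complex.ofReal)ᵀ = M0ᵀ.map Complex.ofReal := by
        ext i j; simp
      rw [this]
      exact (mem_spectrum_iff_eigvec _ μ).mpr ⟨u, hu, heig0⟩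
    have := hK μ hspec0
    rw [h] at this
    exact lt_irrefl 0 this
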